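/- arXiv:2507.22957 — 2 statements merged into one kernel-verified Lean document; each statement's English description precedes it below -/
import Mathlib

section
/- In any graph G without isolated vertices, the domination number is at most the matching number: γ(G) ≤ ν(G). -/
open Finset

/-- Two vertices of a hypergraph (given by its finite set of hyperedges) are
adjacent if they are distinct and lie in a common hyperedge. -/
def HypAdj {W : Type*} (E : Finset (Finset W)) (u v : W) : Prop :=
  u ≠ v ∧ ∃ e ∈ E, u ∈ e ∧ v ∈ e

/-- A matching of a hypergraph: a set of pairwise disjoint hyperedges. -/
def IsHypMatching {W : Type*} (E M : Finset (Finset W)) : Prop :=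
  M ⊆ E ∧ ∀ a ∈ M, ∀ b ∈ M, a ≠ b → Disjoint a b

/-- Matching number of a hypergraph. -/
noncomputable def nuH {W : Type*} (E : Finset (Finset W)) : ℕ :=
  sSup {n | ∃ M : Finset (Finset W), IsHypMatching E M ∧ M.card = n}

/-- A transversal (vertex cover) of a hypergraph: meets every hyperedge. -/
def IsTransversal {W : Type*} (E : Finset (Finset W)) (T : Finset W) : Prop :=
  ∀ e ∈ E, ∃ w ∈ T, w ∈ e

/-- Transversal number of a hypergraph. -/
noncomputable def tauH {W : Type*} (E : Finset (Finset W)) : ℕ :=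
  sInf {n | ∃ T : Finset W, IsTransversal E T ∧ T.card = n}

/-- A dominating set of a hypergraph: every vertex outside it is adjacent
(shares a hyperedge) with some vertex inside it. -/
def IsDominatingH {W : Type*} (E : Finset (Finset W)) (D : Finset W) : Prop :=
  ∀ v, v ∉ D → ∃ u ∈ D, HypAdj E u v

/-- Domination number of a hypergraph on the (finite) vertex type `W`. -/
noncomputable def gammaH {W : Type*} (E : Finset (Finset W)) : ℕ :=
  sInf {n | ∃ D : Finset W, IsDominatingH E D ∧ D.card = n}

/-- The two-element finset associated to an unordered pair. -/
noncomputable def sym2ToFinset {V : Type*} (e : Sym2 V) : Finset V := by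
  classical exact Sym2.lift ⟨fun a b => ({a, b} : Finset V), fun a b => Finset.pair_comm a b⟩ e

/-- The edges of a simple graph, viewed as the hyperedges (of size two)
of a 2-uniform hypergraph. -/
noncomputable def graphEdges {V : Type*} [Fintype V] (G : SimpleGraph V) :
    Finset (Finset V) := by
  classical exact ((Finset.univ : Finset (Sym2 V)).filter (· ∈ G.edgeSet)).image sym2ToFinset

/-- A dominating set of a simple graph. -/
def IsDominatingG {V : Type*} (G : SimpleGraph V) (D : Finset V) : Prop :=
  ∀ v, v ∉ D → ∃ u ∈ D, G.Adj u v

/-- Domination number of a simple graph. -/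
noncomputable def gammaG {V : Type*} [Fintype V] (G : SimpleGraph V) : ℕ :=
  sInf {n | ∃ D : Finset V, IsDominatingG G D ∧ D.card = n}

/-- A Berge-`G` hypergraph on vertex type `W`: an injection `i` of the vertices
of `G` and a bijection `f` from the edges of `G` to the hyperedges `EH`,
such that each edge of `G` is embedded in the corresponding hyperedge. -/
structure BergeG {V : Type*} (G : SimpleGraph V) (W : Type*) where
  EH : Finset (Finset W)
  i : V ↪ W
  f : Sym2 V → Finset W
  f_mem : ∀ ⦃e⦄, e ∈ G.edgeSet → f e ∈ EH
  f_inj : ∀ ⦃e e'⦄, e ∈ G.edgeSet → e' ∈ G.edgeSet → f e = f e' → e = e'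
  f_surj : ∀ h ∈ EH, ∃ e ∈ G.edgeSet, f e = h
  contains : ∀ ⦃u v⦄, G.Adj u v → i u ∈ f s(u, v) ∧ i v ∈ f s(u, v)

/-- A dilation of a simple graph `G`, on the vertex type `W`: each vertex `v` of `G`
is blown up to a finset `vset v` containing the support vertex `supp v`, each edge `e`
of `G` gets a (possibly empty) finset `eset e` of additional vertices, all these finsets
being pairwise disjoint and covering `W`; the hyperedge corresponding to the edge
`e = {u,v}` is `vset u ∪ vset v ∪ eset e`, and all hyperedges have size at most the
rank `k ≥ 3`. -/
structure GraphDilation {V : Type*} (G : SimpleGraph V) (W : Type*) where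
  vset : V → Finset W
  supp : V → W
  eset : Sym2 V → Finset W
  k : ℕ
  k_ge : 3 ≤ k
  supp_mem : ∀ v, supp v ∈ vset v
  vset_disj : ∀ ⦃u v : V⦄, u ≠ v → Disjoint (vset u) (vset v)
  eset_disj : ∀ ⦃e f : Sym2 V⦄, e ∈ G.edgeSet → f ∈ G.edgeSet → e ≠ f →
    Disjoint (eset e) (eset f)
  vset_eset_disj : ∀ (v : V), ∀ ⦃e : Sym2 V⦄, e ∈ G.edgeSet → Disjoint (vset v) (eset e)
  card_le : ∀ ⦃u v : V⦄, G.Adj u v →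
    (vset u).card + (vset v).card + (eset s(u, v)).card ≤ k
  cover : ∀ w : W, (∃ v : V, w ∈ vset v) ∨ (∃ e ∈ G.edgeSet, w ∈ eset e)

/-- The hyperedge of a dilation corresponding to an edge `e` of the support graph. -/
noncomputable def GraphDilation.hedge {V W : Type*} {G : SimpleGraph V} (D : GraphDilation G W)
    (e : Sym2 V) : Finset W := by
  classical exact (sym2ToFinset e).biUnion D.vset ∪ D.eset e

/-- The hyperedge set of a dilation. -/
noncomputable def GraphDilation.edges {V W : Type*} [Fintype V] {G : SimpleGraph V}
    (D : GraphDilation G W) : Finset (Finset W) := by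
  classical exact ((Finset.univ : Finset (Sym2 V)).filter (· ∈ G.edgeSet)).image D.hedge


lemma sym2ToFinset_pair {V : Type*} [DecidableEq V] (a b : V) :
    sym2ToFinset s(a,b) = {a,b} := by
  rw [sym2ToFinset, Sym2.lift_mk]
  ext x; simp

lemma mem_graphEdges {V : Type*} [Fintype V] [DecidableEq V] {G : SimpleGraph V}
    {m : Finset V} : m ∈ graphEdges G ↔ ∃ a b, G.Adj a b ∧ m = {a, b} := by
  constructor
  · intro hm
    rw [graphEdges] at hm
    simp only [Finset.mem_image, Finset.mem_filter, Finset.mem_univ, true_and] at hm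
    obtain ⟨e, he, rfl⟩ := hm
    induction e using Sym2.ind with
    | _ a b =>
      exact ⟨a, b, he, sym2ToFinset_pair a b⟩
  · rintro ⟨a, b, hab, rfl⟩
    rw [graphEdges]
    simp only [Finset.mem_image, Finset.mem_filter, Finset.mem_univ, true_and]
    exact ⟨s(a,b), hab, sym2ToFinset_pair a b⟩

lemma adj_of_mem_graphEdges {V : Type*} [Fintype V] [DecidableEq V] {G : SimpleGraph V}
    {m : Finset V} (hm : m ∈ graphEdges G) {x y : V} (hx : x ∈ m) (hy : y ∈ m)
    (hxy : x ≠ y) : G.Adj x y := by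
  obtain ⟨a, b, hab, rfl⟩ := mem_graphEdges.1 hm
  simp only [Finset.mem_insert, Finset.mem_singleton] at hx hy
  rcases hx with rfl | rfl <;> rcases hy with rfl | rfl
  · exact absurd rfl hxy
  · exact hab
  · exact hab.symm
  · exact absurd rfl hxy

lemma eq_pair_of_mem_graphEdges {V : Type*} [Fintype V] [DecidableEq V] {G : SimpleGraph V}
    {m : Finset V} (hm : m ∈ graphEdges G) {x y : V} (hx : x ∈ m) (hy : y ∈ m)
    (hxy : x ≠ y) : m = {x, y} := by
  obtain ⟨a, b, hab, rfl⟩ := mem_graphEdges.1 hm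
  have hsub : ({x, y} : Finset V) ⊆ {a, b} := by
    intro z hz
    simp only [Finset.mem_insert, Finset.mem_singleton] at hz
    rcases hz with rfl | rfl
    · exact hx
    · exact hy
  exact (Finset.eq_of_subset_of_card_le hsub
    (by rw [Finset.card_pair hab.ne, Finset.card_pair hxy])).symm

theorem graph_gamma_le_nu {V : Type*} [Fintype V] (G : SimpleGraph V)
    (hiso : ∀ v : V, ∃ u : V, G.Adj v u) :
    gammaG G ≤ nuH (graphEdges G) := by
  classical
  set S := {n | ∃ M : Finset (Finset V), IsHypMatching (graphEdges G) M ∧ M.card = n} with hS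
  have h0 : (0:ℕ) ∈ S := ⟨∅, ⟨Finset.empty_subset _, by simp⟩, rfl⟩
  have hbdd : BddAbove S := ⟨(graphEdges G).card, by
    rintro n ⟨M, hM, rfl⟩; exact Finset.card_le_card hM.1⟩
  have hnu : nuH (graphEdges G) = sSup S := rfl
  have hmem : sSup S ∈ S := Nat.sSup_mem ⟨0, h0⟩ hbdd
  obtain ⟨M, hM, hcard⟩ := hmem
  have hmax : ∀ M' : Finset (Finset V), IsHypMatching (graphEdges G) M' →
      M'.card ≤ sSup S := fun M' h => le_csSup hbdd ⟨M', h, rfl⟩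
  set VM : Finset V := M.biUnion id with hVM
  have memVM : ∀ {v : V}, v ∈ VM ↔ ∃ m ∈ M, v ∈ m := by
    intro v; simp [hVM]
  -- Key lemma 1 : every edge has a matched endpoint
  have key1 : ∀ a b : V, G.Adj a b → a ∈ VM ∨ b ∈ VM := by
    intro a b hab
    by_contra h
    push_neg at h
    obtain ⟨ha, hb⟩ := h
    have hdisjAB : ∀ m ∈ M, Disjoint ({a, b} : Finset V) m := by
      intro m hm
      rw [Finset.disjoint_left]
      intro x hx hxm
      simp only [Finset.mem_insert, Finset.mem_singleton] at hx
      rcases hx with rfl | rfl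
      · exact ha (memVM.2 ⟨m, hm, hxm⟩)
      · exact hb (memVM.2 ⟨m, hm, hxm⟩)
    have hnotin : ({a, b} : Finset V) ∉ M := fun hm =>
      ha (memVM.2 ⟨_, hm, Finset.mem_insert_self a _⟩)
    have hmatch : IsHypMatching (graphEdges G) (insert {a, b} M) := by
      constructor
      · intro m hm
        rcases Finset.mem_insert.1 hm with rfl | hm
        · exact mem_graphEdges.2 ⟨a, b, hab, rfl⟩
        · exact hM.1 hm
      · intro m hm m' hm' hne
        rcases Finset.mem_insert.1 hm with rfl | hm <;>
          rcases Finset.mem_insert.1 hm' with rfl | hm'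
        · exact absurd rfl hne
        · exact hdisjAB _ hm'
        · exact (hdisjAB _ hm).symm
        · exact hM.2 _ hm _ hm' hne
    have := hmax _ hmatch
    rw [Finset.card_insert_of_notMem hnotin, hcard] at this
    omega
  -- Key lemma 2 : no augmenting configuration
  have key2 : ∀ m ∈ M, ∀ x ∈ m, ∀ y ∈ m, x ≠ y → ∀ a b : V, a ∉ VM → b ∉ VM →
      a ≠ b → G.Adj a x → G.Adj b y → False := by
    intro m hmM x hx y hy hxy a b ha hb hab hax hby
    have hxVM : x ∈ VM := memVM.2 ⟨m, hmM, hx⟩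
    have hyVM : y ∈ VM := memVM.2 ⟨m, hmM, hy⟩
    have hax' : a ≠ x := fun h => ha (h ▸ hxVM)
    have hby' : b ≠ y := fun h => hb (h ▸ hyVM)
    have hay : a ≠ y := fun h => ha (h ▸ hyVM)
    have hbx : b ≠ x := fun h => hb (h ▸ hxVM)
    -- unmatched vertices lie in no edge of M
    have hnomem : ∀ {c : V}, c ∉ VM → ∀ m' ∈ M, c ∉ m' := by
      intro c hc m' hm' hcm'
      exact hc (memVM.2 ⟨m', hm', hcm'⟩)
    -- x, y lie only in m among edges of M
    have honly : ∀ {z : V}, z ∈ m → ∀ m' ∈ M, m' ≠ m → z ∉ m' := by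
      intro z hz m' hm' hne hzm'
      exact (Finset.disjoint_left.1 (hM.2 _ hm' _ hmM hne) hzm') hz
    set M' : Finset (Finset V) := insert {a, x} (insert {y, b} (M.erase m)) with hM'
    have haxne : ({a, x} : Finset V) ≠ {y, b} := by
      intro h
      have : a ∈ ({y, b} : Finset V) := h ▸ Finset.mem_insert_self a _
      simp only [Finset.mem_insert, Finset.mem_singleton] at this
      rcases this with rfl | rfl
      · exact hay rfl
      · exact hab rfl
    have hdax : ∀ m' ∈ M.erase m, Disjoint ({a, x} : Finset V) m' := by
      intro m' hm'
      obtain ⟨hne, hm'M⟩ := Finset.mem_erase.1 hm'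
      rw [Finset.disjoint_left]
      intro z hz hzm'
      simp only [Finset.mem_insert, Finset.mem_singleton] at hz
      rcases hz with rfl | rfl
      · exact hnomem ha _ hm'M hzm'
      · exact honly hx _ hm'M hne hzm'
    have hdyb : ∀ m' ∈ M.erase m, Disjoint ({y, b} : Finset V) m' := by
      intro m' hm'
      obtain ⟨hne, hm'M⟩ := Finset.mem_erase.1 hm'
      rw [Finset.disjoint_left]
      intro z hz hzm'
      simp only [Finset.mem_insert, Finset.mem_singleton] at hz
      rcases hz with rfl | rfl
      · exact honly hy _ hm'M hne hzm'
      · exact hnomem hb _ hm'M hzm'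
    have hdaxyb : Disjoint ({a, x} : Finset V) ({y, b} : Finset V) := by
      rw [Finset.disjoint_left]
      intro z hz hz'
      simp only [Finset.mem_insert, Finset.mem_singleton] at hz hz'
      rcases hz with rfl | rfl <;> rcases hz' with rfl | rfl
      · exact hay rfl
      · exact hab rfl
      · exact hxy rfl
      · exact hbx rfl
    have hmatch : IsHypMatching (graphEdges G) M' := by
      constructor
      · intro e he
        rcases Finset.mem_insert.1 he with rfl | he
        · exact mem_graphEdges.2 ⟨a, x, hax, rfl⟩
        rcases Finset.mem_insert.1 he with rfl | he
        · exact mem_graphEdges.2 ⟨y, b, hby.symm, rfl⟩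
        · exact hM.1 (Finset.mem_of_mem_erase he)
      · intro e he e' he' hne
        rcases Finset.mem_insert.1 he with rfl | he
        · rcases Finset.mem_insert.1 he' with rfl | he'
          · exact absurd rfl hne
          rcases Finset.mem_insert.1 he' with rfl | he'
          · exact hdaxyb
          · exact hdax _ he'
        rcases Finset.mem_insert.1 he with rfl | he
        · rcases Finset.mem_insert.1 he' with rfl | he'
          · exact hdaxyb.symm
          rcases Finset.mem_insert.1 he' with rfl | he'
          · exact absurd rfl hne
          · exact hdyb _ he'
        · rcases Finset.mem_insert.1 he' with rfl | he'
          · exact (hdax _ he).symm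
          rcases Finset.mem_insert.1 he' with rfl | he'
          · exact (hdyb _ he).symm
          · exact hM.2 _ (Finset.mem_of_mem_erase he) _ (Finset.mem_of_mem_erase he') hne
    -- cardinality of M'
    have hybnot : ({y, b} : Finset V) ∉ M.erase m := by
      intro h
      exact hnomem hb _ (Finset.mem_of_mem_erase h)
        (Finset.mem_insert.2 (Or.inr (Finset.mem_singleton_self b)))
    have haxnot : ({a, x} : Finset V) ∉ insert ({y, b} : Finset V) (M.erase m) := by
      intro h
      rcases Finset.mem_insert.1 h with h | h
      · exact haxne h
      · exact hnomem ha _ (Finset.mem_of_mem_erase h) (Finset.mem_insert_self a _)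
    have hcard' : M'.card = M.card + 1 := by
      rw [hM', Finset.card_insert_of_notMem haxnot,
        Finset.card_insert_of_notMem hybnot, Finset.card_erase_of_mem hmM]
      have : 1 ≤ M.card := Finset.card_pos.2 ⟨m, hmM⟩
      omega
    have := hmax _ hmatch
    rw [hcard', hcard] at this
    omega
  -- selection of one vertex per matching edge
  set hasU : V → Prop := fun x => ∃ a, a ∉ VM ∧ G.Adj x a with hhasU
  set sel : Finset V → Finset V := fun m =>
    if h : ∃ x ∈ m, hasU x then {h.choose}
    else if h2 : m.Nonempty then {h2.choose} else ∅ with hsel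
  have selspec : ∀ m : Finset V, m.Nonempty →
      ∃ z, sel m = {z} ∧ z ∈ m ∧ ((∃ x ∈ m, hasU x) → hasU z) := by
    intro m hne
    by_cases h : ∃ x ∈ m, hasU x
    · exact ⟨h.choose, by rw [hsel]; simp only [dif_pos h], h.choose_spec.1,
        fun _ => h.choose_spec.2⟩
    · exact ⟨hne.choose, by rw [hsel]; simp only [dif_neg h, dif_pos hne],
        hne.choose_spec, fun hx => absurd hx h⟩
  set D : Finset V := M.biUnion sel with hD
  have hDcard : D.card ≤ M.card := by
    calc D.card ≤ ∑ m ∈ M, (sel m).card := Finset.card_biUnion_le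
    _ ≤ ∑ m ∈ M, 1 := by
        apply Finset.sum_le_sum
        intro m hm
        simp only [hsel]
        split
        · simp
        · split <;> simp
    _ = M.card := by simp
  -- membership of edges of M
  have memE : ∀ m ∈ M, m ∈ graphEdges G := fun m hm => hM.1 hm
  have mne : ∀ m ∈ M, m.Nonempty := by
    intro m hm
    obtain ⟨a, b, _, rfl⟩ := mem_graphEdges.1 (memE m hm)
    exact ⟨a, Finset.mem_insert_self a _⟩
  -- D is dominating
  have hdom : IsDominatingG G D := by
    intro v hv
    by_cases hvM : v ∈ VM
    · obtain ⟨m, hm, hvm⟩ := memVM.1 hvM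
      obtain ⟨z, hz1, hz2, _⟩ := selspec m (mne m hm)
      have hzD : z ∈ D := Finset.mem_biUnion.2 ⟨m, hm, hz1 ▸ Finset.mem_singleton_self z⟩
      have hzv : z ≠ v := fun h => hv (h ▸ hzD)
      exact ⟨z, hzD, adj_of_mem_graphEdges (memE m hm) hz2 hvm hzv⟩
    · obtain ⟨u0, hu0⟩ := hiso v
      have hu0VM : u0 ∈ VM := by
        rcases key1 v u0 hu0 with h | h
        · exact absurd h hvM
        · exact h
      obtain ⟨m, hm, hu0m⟩ := memVM.1 hu0VM
      have hEx : ∃ x ∈ m, hasU x := ⟨u0, hu0m, ⟨v, hvM, hu0.symm⟩⟩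
      obtain ⟨z, hz1, hz2, hz3⟩ := selspec m (mne m hm)
      have hzU := hz3 hEx
      have hzD : z ∈ D := Finset.mem_biUnion.2 ⟨m, hm, hz1 ▸ Finset.mem_singleton_self z⟩
      by_cases hzu : z = u0
      · exact ⟨z, hzD, hzu ▸ hu0.symm⟩
      · obtain ⟨b, hbVM, hzb⟩ := hzU
        by_cases hvb : v = b
        · exact ⟨z, hzD, hvb ▸ hzb⟩
        · exact (key2 m hm u0 hu0m z hz2 (Ne.symm hzu) v b hvM hbVM hvb
            hu0 hzb.symm).elim
  have h1 : gammaG G ≤ D.card := Nat.sInf_le ⟨D, hdom, rfl⟩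
  rw [hnu]
  omega
end

section
/- Let G be a graph without isolated vertices and H a dilation of G in which every hyperedge contains at least one additional vertex. Then γ(H) = ν(H) if and only if G is a König–Egerváry graph, i.e., τ(G) = ν(G). -/
open Finset

section Aux

variable {V W : Type*} [Fintype V] {G : SimpleGraph V}

set_option linter.unusedSectionVars false in
lemma mem_s2f {x : V} {e : Sym2 V} : x ∈ sym2ToFinset e ↔ x ∈ e := by
  induction e using Sym2.inductionOn with
  | hf a b => simp [sym2ToFinset, Sym2.mem_iff]

lemma s2f_nonempty (e : Sym2 V) : (sym2ToFinset e).Nonempty :=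
  ⟨(Quot.out e).1, mem_s2f.mpr (Sym2.out_fst_mem e)⟩

lemma s2f_inj {e f : Sym2 V} (h : sym2ToFinset e = sym2ToFinset f) : e = f := by
  apply Sym2.ext; intro x; rw [← mem_s2f, ← mem_s2f, h]

lemma mem_graphEdges_s15 {h : Finset V} :
    h ∈ graphEdges G ↔ ∃ e ∈ G.edgeSet, sym2ToFinset e = h := by
  classical
  simp [graphEdges, Finset.mem_image, Finset.mem_filter]

variable (D : GraphDilation G W)

lemma mem_hedge {w : W} {e : Sym2 V} :
    w ∈ D.hedge e ↔ (∃ x ∈ e, w ∈ D.vset x) ∨ w ∈ D.eset e := by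
  classical
  simp [GraphDilation.hedge, Finset.mem_union, Finset.mem_biUnion, mem_s2f]

lemma vset_subset_hedge {x : V} {e : Sym2 V} (hx : x ∈ e) : D.vset x ⊆ D.hedge e := by
  intro w hw; exact (mem_hedge D).mpr (Or.inl ⟨x, hx, hw⟩)

lemma eset_subset_hedge {e : Sym2 V} : D.eset e ⊆ D.hedge e := by
  intro w hw; exact (mem_hedge D).mpr (Or.inr hw)

lemma mem_edges {h : Finset W} :
    h ∈ D.edges ↔ ∃ e ∈ G.edgeSet, D.hedge e = h := by
  classical
  simp [GraphDilation.edges, Finset.mem_image, Finset.mem_filter]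

lemma hedge_mem_edges {e : Sym2 V} (he : e ∈ G.edgeSet) : D.hedge e ∈ D.edges :=
  (mem_edges D).mpr ⟨e, he, rfl⟩

/-- An eset vertex of an edge lies only in that edge's hyperedge. -/
lemma eset_unique {w : W} {e f : Sym2 V} (he : e ∈ G.edgeSet) (hf : f ∈ G.edgeSet)
    (hw : w ∈ D.eset e) (hw' : w ∈ D.hedge f) : f = e := by
  rcases (mem_hedge D).mp hw' with ⟨x, _, hx⟩ | hx
  · exact absurd (Finset.disjoint_left.mp (D.vset_eset_disj x he) hx hw) (fun h => h)
  · by_contra hne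
    exact Finset.disjoint_left.mp (D.eset_disj he hf (Ne.symm hne)) hw hx

lemma hedge_inj (hadd : ∀ e ∈ G.edgeSet, (D.eset e).Nonempty)
    {e f : Sym2 V} (he : e ∈ G.edgeSet) (hf : f ∈ G.edgeSet)
    (h : D.hedge e = D.hedge f) : e = f := by
  obtain ⟨w, hw⟩ := hadd e he
  exact (eset_unique D he hf hw (h ▸ eset_subset_hedge D hw)).symm

lemma hedge_disjoint {e f : Sym2 V} (he : e ∈ G.edgeSet) (hf : f ∈ G.edgeSet)
    (hne : e ≠ f) (hd : Disjoint (sym2ToFinset e) (sym2ToFinset f)) :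
    Disjoint (D.hedge e) (D.hedge f) := by
  rw [Finset.disjoint_left]
  intro w hwe hwf
  rcases (mem_hedge D).mp hwe with ⟨x, hx, hvx⟩ | hx
  · rcases (mem_hedge D).mp hwf with ⟨y, hy, hvy⟩ | hy
    · have hxy : x ≠ y := by
        rintro rfl
        exact Finset.disjoint_left.mp hd (mem_s2f.mpr hx) (mem_s2f.mpr hy)
      exact Finset.disjoint_left.mp (D.vset_disj hxy) hvx hvy
    · exact Finset.disjoint_left.mp (D.vset_eset_disj x hf) hvx hy
  · rcases (mem_hedge D).mp hwf with ⟨y, hy, hvy⟩ | hy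
    · exact Finset.disjoint_left.mp (D.vset_eset_disj y he) hvy hx
    · exact Finset.disjoint_left.mp (D.eset_disj he hf hne) hx hy

lemma s2f_disjoint_of_hedge {e f : Sym2 V} (hd : Disjoint (D.hedge e) (D.hedge f)) :
    Disjoint (sym2ToFinset e) (sym2ToFinset f) := by
  rw [Finset.disjoint_left]
  intro x hxe hxf
  exact Finset.disjoint_left.mp hd
    (vset_subset_hedge D (mem_s2f.mp hxe) (D.supp_mem x))
    (vset_subset_hedge D (mem_s2f.mp hxf) (D.supp_mem x))

set_option linter.unusedSectionVars false

open scoped Classical in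
noncomputable def dilProj (w : W) : V :=
  if h : ∃ v, w ∈ D.vset v then h.choose
  else (Quot.out ((D.cover w).resolve_left h).choose).1

lemma dilProj_vset {w : W} {x : V} (hx : w ∈ D.vset x) : dilProj D w = x := by
  have h : ∃ v, w ∈ D.vset v := ⟨x, hx⟩
  rw [dilProj, dif_pos h]
  by_contra hne
  exact Finset.disjoint_left.mp (D.vset_disj hne) h.choose_spec hx

lemma dilProj_eset {w : W} {e : Sym2 V} (he : e ∈ G.edgeSet) (hw : w ∈ D.eset e) :
    dilProj D w ∈ sym2ToFinset e := by
  have h : ¬∃ v, w ∈ D.vset v := by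
    rintro ⟨v, hv⟩
    exact Finset.disjoint_left.mp (D.vset_eset_disj v he) hv hw
  rw [dilProj, dif_neg h]
  obtain ⟨hf, hwf⟩ := ((D.cover w).resolve_left h).choose_spec
  have : ((D.cover w).resolve_left h).choose = e := by
    by_contra hne
    exact Finset.disjoint_left.mp (D.eset_disj hf he hne) hwf hw
  rw [this] at *
  exact mem_s2f.mpr (Sym2.out_fst_mem e)

end Aux


section Main
set_option linter.unusedSectionVars false

variable {V W : Type*} [Fintype V] [DecidableEq V] [DecidableEq W] {G : SimpleGraph V}
  (D : GraphDilation G W)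

lemma matching_set_eq (hadd : ∀ e ∈ G.edgeSet, (D.eset e).Nonempty) :
    {n | ∃ M : Finset (Finset W), IsHypMatching D.edges M ∧ M.card = n} =
    {n | ∃ M : Finset (Finset V), IsHypMatching (graphEdges G) M ∧ M.card = n} := by
  classical
  ext n
  constructor
  · rintro ⟨M, ⟨hsub, hdisj⟩, rfl⟩
    set F : Finset (Sym2 V) :=
      Finset.univ.filter (fun e => e ∈ G.edgeSet ∧ D.hedge e ∈ M) with hF
    have hFmem : ∀ e ∈ F, e ∈ G.edgeSet ∧ D.hedge e ∈ M := by
      intro e he; exact (Finset.mem_filter.mp he).2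
    have hM : M = F.image D.hedge := by
      ext h
      constructor
      · intro hh
        obtain ⟨e, he, heq⟩ := (mem_edges D).mp (hsub hh)
        exact Finset.mem_image.mpr ⟨e, Finset.mem_filter.mpr
          ⟨Finset.mem_univ e, he, heq ▸ hh⟩, heq⟩
      · intro hh
        obtain ⟨e, he, heq⟩ := Finset.mem_image.mp hh
        exact heq ▸ (hFmem e he).2
    have hcard1 : M.card = F.card := by
      rw [hM]
      exact Finset.card_image_of_injOn (fun e he f hf h =>
        hedge_inj D hadd (hFmem e he).1 (hFmem f hf).1 h)
    refine ⟨F.image sym2ToFinset, ⟨?_, ?_⟩, ?_⟩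
    · intro h hh
      obtain ⟨e, he, heq⟩ := Finset.mem_image.mp hh
      exact mem_graphEdges_s15.mpr ⟨e, (hFmem e he).1, heq⟩
    · intro a ha b hb hab
      obtain ⟨e1, he1, heq1⟩ := Finset.mem_image.mp ha
      obtain ⟨e2, he2, heq2⟩ := Finset.mem_image.mp hb
      have hne : e1 ≠ e2 := by rintro rfl; exact hab (heq1 ▸ heq2 ▸ rfl)
      have hhne : D.hedge e1 ≠ D.hedge e2 := fun h =>
        hne (hedge_inj D hadd (hFmem e1 he1).1 (hFmem e2 he2).1 h)
      have := hdisj _ (hFmem e1 he1).2 _ (hFmem e2 he2).2 hhne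
      rw [← heq1, ← heq2]
      exact s2f_disjoint_of_hedge D this
    · rw [hcard1]
      exact Finset.card_image_of_injOn (fun e _ f _ h => s2f_inj h)
  · rintro ⟨M, ⟨hsub, hdisj⟩, rfl⟩
    set F : Finset (Sym2 V) :=
      Finset.univ.filter (fun e => e ∈ G.edgeSet ∧ sym2ToFinset e ∈ M) with hF
    have hFmem : ∀ e ∈ F, e ∈ G.edgeSet ∧ sym2ToFinset e ∈ M := by
      intro e he; exact (Finset.mem_filter.mp he).2
    have hM : M = F.image sym2ToFinset := by
      ext h
      constructor
      · intro hh
        obtain ⟨e, he, heq⟩ := mem_graphEdges_s15.mp (hsub hh)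
        exact Finset.mem_image.mpr ⟨e, Finset.mem_filter.mpr
          ⟨Finset.mem_univ e, he, heq ▸ hh⟩, heq⟩
      · intro hh
        obtain ⟨e, he, heq⟩ := Finset.mem_image.mp hh
        exact heq ▸ (hFmem e he).2
    have hcard1 : M.card = F.card := by
      rw [hM]
      exact Finset.card_image_of_injOn (fun e _ f _ h => s2f_inj h)
    refine ⟨F.image D.hedge, ⟨?_, ?_⟩, ?_⟩
    · intro h hh
      obtain ⟨e, he, heq⟩ := Finset.mem_image.mp hh
      exact heq ▸ hedge_mem_edges D (hFmem e he).1
    · intro a ha b hb hab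
      obtain ⟨e1, he1, heq1⟩ := Finset.mem_image.mp ha
      obtain ⟨e2, he2, heq2⟩ := Finset.mem_image.mp hb
      have hne : e1 ≠ e2 := by rintro rfl; exact hab (heq1 ▸ heq2 ▸ rfl)
      have hsne : sym2ToFinset e1 ≠ sym2ToFinset e2 := fun h => hne (s2f_inj h)
      have := hdisj _ (hFmem e1 he1).2 _ (hFmem e2 he2).2 hsne
      rw [← heq1, ← heq2]
      exact hedge_disjoint D (hFmem e1 he1).1 (hFmem e2 he2).1 hne this
    · rw [hcard1]
      exact Finset.card_image_of_injOn (fun e he f hf h =>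
        hedge_inj D hadd (hFmem e he).1 (hFmem f hf).1 h)

lemma nu_eq (hadd : ∀ e ∈ G.edgeSet, (D.eset e).Nonempty) :
    nuH D.edges = nuH (graphEdges G) := by
  rw [nuH, nuH, matching_set_eq D hadd]

lemma dominating_of_transversal (hiso : ∀ v : V, ∃ u : V, G.Adj v u)
    {T : Finset V} (hT : IsTransversal (graphEdges G) T) :
    IsDominatingH D.edges (T.image D.supp) := by
  classical
  intro w hw
  have hne : ∀ t ∈ T, D.supp t ≠ w := by
    intro t ht h
    exact hw (h ▸ Finset.mem_image_of_mem D.supp ht)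
  rcases D.cover w with ⟨v, hv⟩ | ⟨e, he, hwe⟩
  · obtain ⟨u, hadj⟩ := hiso v
    have hedge : s(v, u) ∈ G.edgeSet := G.mem_edgeSet.mpr hadj
    obtain ⟨t, htT, hte⟩ := hT _ (mem_graphEdges_s15.mpr ⟨_, hedge, rfl⟩)
    refine ⟨D.supp t, Finset.mem_image_of_mem D.supp htT, hne t htT, D.hedge s(v, u),
      hedge_mem_edges D hedge, vset_subset_hedge D (mem_s2f.mp hte) (D.supp_mem t),
      vset_subset_hedge D ?_ hv⟩
    exact Sym2.mem_mk_left v u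
  · obtain ⟨t, htT, hte⟩ := hT _ (mem_graphEdges_s15.mpr ⟨_, he, rfl⟩)
    exact ⟨D.supp t, Finset.mem_image_of_mem D.supp htT, hne t htT, D.hedge e,
      hedge_mem_edges D he, vset_subset_hedge D (mem_s2f.mp hte) (D.supp_mem t),
      eset_subset_hedge D hwe⟩

lemma transversal_of_dominating (hadd : ∀ e ∈ G.edgeSet, (D.eset e).Nonempty)
    {D' : Finset W} (hD : IsDominatingH D.edges D') :
    ∃ T : Finset V, IsTransversal (graphEdges G) T ∧ T.card ≤ D'.card := by
  classical
  refine ⟨D'.image (dilProj D), ?_, Finset.card_image_le⟩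
  intro h hh
  obtain ⟨e, he, rfl⟩ := mem_graphEdges_s15.mp hh
  obtain ⟨w0, hw0⟩ := hadd e he
  have key : ∃ d ∈ D', d ∈ D.hedge e := by
    by_cases hw0D : w0 ∈ D'
    · exact ⟨w0, hw0D, eset_subset_hedge D hw0⟩
    · obtain ⟨u, huD, _, h', hh', hu, hw0'⟩ := hD w0 hw0D
      obtain ⟨f, hf, rfl⟩ := (mem_edges D).mp hh'
      exact ⟨u, huD, (eset_unique D he hf hw0 hw0') ▸ hu⟩
  obtain ⟨d, hdD, hde⟩ := key
  refine ⟨dilProj D d, Finset.mem_image_of_mem _ hdD, ?_⟩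
  rcases (mem_hedge D).mp hde with ⟨x, hx, hvx⟩ | hx
  · rw [dilProj_vset D hvx]; exact mem_s2f.mpr hx
  · exact dilProj_eset D he hx

lemma univ_transversal : IsTransversal (graphEdges G) (Finset.univ : Finset V) := by
  intro h hh
  obtain ⟨e, he, rfl⟩ := mem_graphEdges_s15.mp hh
  obtain ⟨x, hx⟩ := s2f_nonempty e
  exact ⟨x, Finset.mem_univ x, hx⟩

lemma gamma_eq (hiso : ∀ v : V, ∃ u : V, G.Adj v u)
    (hadd : ∀ e ∈ G.edgeSet, (D.eset e).Nonempty) :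
    gammaH D.edges = tauH (graphEdges G) := by
  classical
  have hτne : {n | ∃ T : Finset V, IsTransversal (graphEdges G) T ∧ T.card = n}.Nonempty :=
    ⟨_, Finset.univ, univ_transversal, rfl⟩
  have hγne : {n | ∃ D' : Finset W, IsDominatingH D.edges D' ∧ D'.card = n}.Nonempty :=
    ⟨_, (Finset.univ : Finset V).image D.supp,
      dominating_of_transversal D hiso univ_transversal, rfl⟩
  rw [gammaH, tauH]
  apply le_antisymm
  · obtain ⟨T, hT, hTc⟩ := Nat.sInf_mem hτne
    calc sInf {n | ∃ D' : Finset W, IsDominatingH D.edges D' ∧ D'.card = n}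
        ≤ (T.image D.supp).card :=
          Nat.sInf_le ⟨T.image D.supp, dominating_of_transversal D hiso hT, rfl⟩
      _ ≤ T.card := Finset.card_image_le
      _ = _ := hTc
  · obtain ⟨D', hD', hDc⟩ := Nat.sInf_mem hγne
    obtain ⟨T, hT, hTc⟩ := transversal_of_dominating D hadd hD'
    calc sInf {n | ∃ T : Finset V, IsTransversal (graphEdges G) T ∧ T.card = n}
        ≤ T.card := Nat.sInf_le ⟨T, hT, rfl⟩
      _ ≤ D'.card := hTc
      _ = _ := hDc

end Main

theorem dilation_gamma_eq_nu_iff_koenig {V W : Type*} [Fintype V] (G : SimpleGraph V)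
    (hiso : ∀ v : V, ∃ u : V, G.Adj v u)
    (D : GraphDilation G W) (hadd : ∀ e ∈ G.edgeSet, (D.eset e).Nonempty) :
    gammaH D.edges = nuH D.edges ↔ tauH (graphEdges G) = nuH (graphEdges G) := by
  classical
  rw [gamma_eq D hiso hadd, nu_eq D hadd]
end
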